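/- arXiv:1808.00674 — 4 statements merged into one kernel-verified Lean document; each statement's English description precedes it below -/
import Mathlib

section
/- Let χ, S, T be binary words such that S is a factor of χ, T is not a factor of χ, and |T| ≥ 1. Suppose that for every j with 1 ≤ j ≤ |T|, the word S ++ T[1..j−1] ++ ¬T[j] (the concatenation of S, the first j−1 symbols of T, and the negation of the j-th symbol of T) is not a factor of χ. Then there exists j with 0 ≤ j < |T| such that S ++ T[1..j] is a suffix of χ. (This is the invariant establishing that when the Basic procedure receives |T| consecutive No answers, the right end of the hidden string has been reached.) -/
lemma extend_infix {χ w : List Bool} (h : w <:+: χ) (hns : ¬ w <:+ χ) :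
    ∃ c, (w ++ [c]) <:+: χ := by
  obtain ⟨u, v, huv⟩ := h
  cases v with
  | nil => exact absurd ⟨u, by simpa using huv⟩ hns
  | cons c v' => exact ⟨c, u, v', by simpa using huv⟩

/-- If `S` is a factor of `χ`, `T` is not a factor of `χ`, `|T| ≥ 1`, and for
every `1 ≤ j ≤ |T|` the word `S ++ T[1..j-1] ++ ¬T[j]` is not a factor of `χ`,
then for some `0 ≤ j < |T|` the word `S ++ T[1..j]` is a suffix of `χ`. -/
theorem basic_right_end_detection (χ S T : List Bool)
    (hS : S <:+: χ)
    (hT : ¬ T <:+: χ)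
    (hTlen : 1 ≤ T.length)
    (hNo : ∀ j, 1 ≤ j → j ≤ T.length →
      ¬ (S ++ T.take (j - 1) ++ [!(T.getD (j - 1) false)]) <:+: χ) :
    ∃ j, j < T.length ∧ (S ++ T.take j) <:+ χ := by
  by_contra h
  push_neg at h
  have key : ∀ j, j ≤ T.length → (S ++ T.take j) <:+: χ := by
    intro j
    induction j with
    | zero => intro _; simpa using hS
    | succ n ih =>
      intro hn
      have hnlt : n < T.length := Nat.lt_of_succ_le hn
      have hinf := ih (Nat.le_of_lt hnlt)
      have hns : ¬ (S ++ T.take n) <:+ χ := h n hnlt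
      obtain ⟨c, hc⟩ := extend_infix hinf hns
      by_cases hce : c = T.getD n false
      · have : T.take (n + 1) = T.take n ++ [T.getD n false] := by
          rw [List.take_succ]
          congr 1
          simp [List.getElem?_eq_getElem hnlt, List.getD_eq_getElem]
        rw [this, ← List.append_assoc]
        rwa [hce] at hc
      · have hcneg : c = !(T.getD n false) := by
          cases c <;> cases hb : T.getD n false <;> simp_all
        exact absurd (by simpa [hcneg] using hc)
          (by simpa using hNo (n + 1) (Nat.le_add_left 1 n) hn)
  have := key T.length le_rfl
  rw [List.take_length] at this
  exact hT (((List.suffix_append S T).isInfix).trans this)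
end

section
/- For every natural number n ≥ 1, the sum over all binary words x of length n of max(0, d(x) − ⌈log₂ n⌉) is at most 2^{n+1}, where d(x) is the length of the longest run of 0's in x. (This bounds the upper-tail contribution in the average-case analysis: the total excess of the longest 0-run beyond log₂ n, summed over all 2^n strings, is at most 2·2^n.) -/
/-- `longestZeroRun x` is the largest `ℓ` such that `0^ℓ` is a factor of `x`. -/
noncomputable def longestZeroRun (x : List Bool) : ℕ :=
  sSup {ℓ : ℕ | List.replicate ℓ false <:+: x}

lemma lzr_spec (x : List Bool) (ℓ : ℕ) :
    ℓ ≤ longestZeroRun x ↔ List.replicate ℓ false <:+: x := by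
  have hb : BddAbove {ℓ : ℕ | List.replicate ℓ false <:+: x} := by
    refine ⟨x.length, fun m hm => ?_⟩
    simpa using hm.length_le
  have hne : {ℓ : ℕ | List.replicate ℓ false <:+: x}.Nonempty := ⟨0, by simp⟩
  constructor
  · intro h
    have hmem := Nat.sSup_mem hne hb
    have hpre : List.replicate ℓ false <+: List.replicate (longestZeroRun x) false :=
      ⟨List.replicate (longestZeroRun x - ℓ) false, by
        rw [← List.replicate_add]; congr 1; omega⟩
    exact hpre.isInfix.trans hmem
  · intro h
    exact le_csSup hb h

lemma lzr_le (n : ℕ) (x : Fin n → Bool) : longestZeroRun (List.ofFn x) ≤ n := by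
  have := (lzr_spec (List.ofFn x) (longestZeroRun (List.ofFn x))).mp le_rfl
  simpa using this.length_le


open Finset in
lemma countA (n ℓ i : ℕ) (hℓ : 1 ≤ ℓ) (hi : i + ℓ ≤ n) :
    (Finset.univ.filter (fun x : Fin n → Bool =>
        ∀ j < ℓ, ∀ (h : i + j < n), x ⟨i + j, h⟩ = false)).card ≤ 2 ^ (n - ℓ) := by
  classical
  have hcard : Fintype.card (Fin (n - ℓ) → Bool) = 2 ^ (n - ℓ) := by simp
  rw [← hcard, ← Finset.card_univ]
  apply Finset.card_le_card_of_injOn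
    (fun x => fun m : Fin (n - ℓ) =>
      x ⟨if m.val < i then m.val else m.val + ℓ, by split <;> omega⟩)
  · intro _ _; exact Finset.mem_univ _
  · intro x hx y hy hxy
    simp only [Finset.coe_filter, Set.mem_setOf_eq, Finset.mem_univ, true_and] at hx hy
    funext p
    rcases lt_or_ge p.val i with hp | hp
    · have hpm : p.val < n - ℓ := by omega
      have := congrFun hxy ⟨p.val, hpm⟩
      simp only [hp, if_pos] at this
      convert this using 2
    · rcases lt_or_ge p.val (i + ℓ) with hp2 | hp2
      · have hx0 := hx (p.val - i) (by omega) (by omega)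
        have hy0 := hy (p.val - i) (by omega) (by omega)
        have hped : (⟨i + (p.val - i), by omega⟩ : Fin n) = p := Fin.ext (by simp; omega)
        rw [hped] at hx0 hy0
        rw [hx0, hy0]
      · have hpm : p.val - ℓ < n - ℓ := by omega
        have := congrFun hxy ⟨p.val - ℓ, hpm⟩
        have hcond : ¬ (p.val - ℓ < i) := by omega
        simp only [hcond, if_neg, not_false_iff] at this
        have hped : (⟨p.val - ℓ + ℓ, by omega⟩ : Fin n) = p := Fin.ext (by simp; omega)
        rwa [hped] at this

open Finset in
lemma count_le (n ℓ : ℕ) (hℓ : 1 ≤ ℓ) (hln : ℓ ≤ n) :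
    (Finset.univ.filter (fun x : Fin n → Bool =>
        List.replicate ℓ false <:+: List.ofFn x)).card ≤ (n + 1 - ℓ) * 2 ^ (n - ℓ) := by
  classical
  have hsub : (Finset.univ.filter (fun x : Fin n → Bool =>
      List.replicate ℓ false <:+: List.ofFn x)) ⊆
      (Finset.range (n + 1 - ℓ)).biUnion (fun i =>
        Finset.univ.filter (fun x : Fin n → Bool =>
          ∀ j < ℓ, ∀ (h : i + j < n), x ⟨i + j, h⟩ = false)) := by
    intro x hx
    simp only [Finset.mem_filter, Finset.mem_univ, true_and] at hx
    obtain ⟨s, t, hst⟩ := hx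
    have hlen : s.length + ℓ + t.length = n := by
      have := congrArg List.length hst
      simpa [Nat.add_assoc] using this
    refine Finset.mem_biUnion.mpr ⟨s.length, Finset.mem_range.mpr (by omega), ?_⟩
    simp only [Finset.mem_filter, Finset.mem_univ, true_and]
    intro j hj h
    have hgl : s.length + j < (List.ofFn x).length := by simpa using h
    have h1 : (List.ofFn x)[s.length + j]'hgl = x ⟨s.length + j, h⟩ := by
      simp [List.getElem_ofFn]
    have h2 := List.getElem_of_eq hst.symm hgl
    rw [← h1, h2]
    have h3 : ((s ++ List.replicate ℓ false) ++ t)[s.length + j]'(by simp; omega)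
        = (s ++ List.replicate ℓ false)[s.length + j]'(by simp; omega) :=
      List.getElem_append_left (by simp; omega)
    rw [h3, List.getElem_append_right (by omega)]
    simp
  calc _ ≤ _ := Finset.card_le_card hsub
    _ ≤ ∑ i ∈ Finset.range (n + 1 - ℓ), (Finset.univ.filter (fun x : Fin n → Bool =>
          ∀ j < ℓ, ∀ (h : i + j < n), x ⟨i + j, h⟩ = false)).card :=
        Finset.card_biUnion_le
    _ ≤ ∑ i ∈ Finset.range (n + 1 - ℓ), 2 ^ (n - ℓ) := by
        refine Finset.sum_le_sum fun i hi => countA n ℓ i hℓ ?_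
        have := Finset.mem_range.mp hi; omega
    _ = (n + 1 - ℓ) * 2 ^ (n - ℓ) := by simp [Finset.sum_const, Finset.card_range]


lemma geom_aux (a b : ℕ) : (∑ ℓ ∈ Finset.Ioc a b, 2 ^ (b - ℓ)) + 1 ≤ 2 ^ (b - a) := by
  induction b with
  | zero => simp
  | succ b ih =>
    rcases le_or_gt a b with hab | hab
    · rw [Finset.sum_Ioc_succ_top (by omega)]
      have hre : ∑ ℓ ∈ Finset.Ioc a b, 2 ^ (b + 1 - ℓ)
          = 2 * ∑ ℓ ∈ Finset.Ioc a b, 2 ^ (b - ℓ) := by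
        rw [Finset.mul_sum]
        refine Finset.sum_congr rfl fun ℓ hℓ => ?_
        have hm := Finset.mem_Ioc.mp hℓ
        rw [show b + 1 - ℓ = (b - ℓ) + 1 by omega, pow_succ]
        ring
      rw [hre, show b + 1 - (b + 1) = 0 by omega,
        show b + 1 - a = (b - a) + 1 by omega, pow_succ]
      omega
    · rw [Finset.Ioc_eq_empty (by omega)]
      have : 1 ≤ 2 ^ (b + 1 - a) := Nat.one_le_two_pow
      simpa using this

/-- Summed over all binary words of length `n ≥ 1`, the excess of the longest
`0`-run beyond `⌈log₂ n⌉` is at most `2 ^ (n + 1)`. -/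
theorem sum_excess_longest_zero_run_le (n : ℕ) (hn : 1 ≤ n) :
    ∑ x : Fin n → Bool, (longestZeroRun (List.ofFn x) - Nat.clog 2 n)
      ≤ 2 ^ (n + 1) := by
  classical
  set k := Nat.clog 2 n with hk
  have hstep : ∀ x : Fin n → Bool, longestZeroRun (List.ofFn x) - k
      = ∑ ℓ ∈ Finset.Ioc k n,
          (if List.replicate ℓ false <:+: List.ofFn x then 1 else 0) := by
    intro x
    have hd := lzr_le n x
    rw [← Finset.card_filter]
    have hf : (Finset.Ioc k n).filter
        (fun ℓ => List.replicate ℓ false <:+: List.ofFn x)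
        = Finset.Ioc k (longestZeroRun (List.ofFn x)) := by
      ext ℓ
      simp only [Finset.mem_filter, Finset.mem_Ioc, ← lzr_spec]
      omega
    rw [hf, Nat.card_Ioc]
  calc ∑ x : Fin n → Bool, (longestZeroRun (List.ofFn x) - k)
      = ∑ x : Fin n → Bool, ∑ ℓ ∈ Finset.Ioc k n,
          (if List.replicate ℓ false <:+: List.ofFn x then 1 else 0) :=
        Finset.sum_congr rfl fun x _ => hstep x
    _ = ∑ ℓ ∈ Finset.Ioc k n, ∑ x : Fin n → Bool,
          (if List.replicate ℓ false <:+: List.ofFn x then 1 else 0) :=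
        Finset.sum_comm
    _ = ∑ ℓ ∈ Finset.Ioc k n, (Finset.univ.filter (fun x : Fin n → Bool =>
          List.replicate ℓ false <:+: List.ofFn x)).card :=
        Finset.sum_congr rfl fun ℓ _ => (Finset.card_filter _ _).symm
    _ ≤ ∑ ℓ ∈ Finset.Ioc k n, n * 2 ^ (n - ℓ) := by
        refine Finset.sum_le_sum fun ℓ hℓ => ?_
        have hm := Finset.mem_Ioc.mp hℓ
        refine le_trans (count_le n ℓ (by omega) hm.2) ?_
        exact Nat.mul_le_mul_right _ (by omega)
    _ = n * ∑ ℓ ∈ Finset.Ioc k n, 2 ^ (n - ℓ) := (Finset.mul_sum _ _ _).symm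
    _ ≤ n * 2 ^ (n - k) := Nat.mul_le_mul_left _ (by have := geom_aux k n; omega)
    _ ≤ 2 ^ k * 2 ^ (n - k) :=
        Nat.mul_le_mul_right _ (Nat.le_pow_clog one_lt_two n)
    _ ≤ 2 ^ (n + 1) := by
        have hkn : k ≤ n := (Nat.clog_le_iff_le_pow one_lt_two).mpr (Nat.lt_two_pow_self (n := n)).le
        rw [← pow_add]
        exact Nat.pow_le_pow_right (by norm_num) (by omega)
end

section
/- For every natural number n ≥ 16 and every natural number ℓ with 1 ≤ ℓ ≤ log₂ n − 1, the following real inequality holds: (1 − 1/(2^{ℓ+1} − 1))^{n−ℓ+1} · (1 − 2^{−ℓ}) < 1/2. (This is the ratio estimate β(ℓ−1)/β(ℓ) < 2^{−1} used to show that the lower-tail counts in the average-case analysis decay geometrically.) -/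
private lemma aux_quad_le_pow (x : ℝ) (hx : 0 ≤ x) :
    ∀ k : ℕ, 1 + k*x + k*((k:ℝ)-1)/2*x^2 ≤ (1+x)^k := by
  intro k
  induction k with
  | zero => norm_num
  | succ m ih =>
    have hk : (0:ℝ) ≤ (m:ℝ)*((m:ℝ)-1) := by
      rcases Nat.eq_zero_or_pos m with h|h
      · subst h; norm_num
      · have : (1:ℝ) ≤ m := by exact_mod_cast h
        nlinarith
    have h1 : (0:ℝ) ≤ 1 + x := by linarith
    calc 1 + (m+1:ℕ)*x + (m+1:ℕ)*(((m+1:ℕ):ℝ)-1)/2*x^2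
        ≤ (1 + m*x + m*((m:ℝ)-1)/2*x^2)*(1+x) := by
          push_cast
          nlinarith [mul_nonneg (mul_nonneg hk hx) (mul_nonneg hx hx)]
      _ ≤ (1+x)^m * (1+x) := mul_le_mul_of_nonneg_right ih h1
      _ = (1+x)^(m+1) := (pow_succ _ _).symm

private lemma aux_eight (ℓ : ℕ) : 8*ℓ ≤ 2^(ℓ+1) + 8 := by
  induction ℓ with
  | zero => norm_num
  | succ m ih =>
    rcases Nat.lt_or_ge m 2 with h|h
    · interval_cases m <;> norm_num
    · have h8 : 8 ≤ 2^(m+1) := by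
        calc 8 = 2^3 := rfl
          _ ≤ 2^(m+1) := Nat.pow_le_pow_right (by norm_num) (by omega)
      have hd : 2^(m+1+1) = 2*2^(m+1) := by ring
      omega

private lemma aux_main (k : ℕ) (x : ℝ) (hx0 : 0 < x) (hx1 : x ≤ 1)
    (hB : 2 ≤ 1 + k*x + k*((k:ℝ)-1)/2*x^2) (f : ℝ) (hf0 : 0 ≤ f) (hf1 : f < 1) :
    (1-x)^k * f < 1/2 := by
  have hBpos : (0:ℝ) < 1 + k*x + k*((k:ℝ)-1)/2*x^2 := by linarith
  have hA : 1 + k*x + k*((k:ℝ)-1)/2*x^2 ≤ (1+x)^k := aux_quad_le_pow x hx0.le k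
  have hppos : (0:ℝ) < (1+x)^k := by positivity
  have hprod : (1-x)^k * (1+x)^k ≤ 1 := by
    rw [← mul_pow]
    have heq : (1-x)*(1+x) = 1 - x^2 := by ring
    rw [heq]
    exact pow_le_one₀ (by nlinarith) (by nlinarith)
  have hle1 : (1-x)^k ≤ 1/(1+x)^k := by
    rw [le_div_iff₀ hppos]; exact hprod
  have hle2 : (1/(1+x)^k : ℝ) ≤ 1/(1 + k*x + k*((k:ℝ)-1)/2*x^2) :=
    one_div_le_one_div_of_le hBpos hA
  have hpow_le : (1-x)^k ≤ 1/(1 + k*x + k*((k:ℝ)-1)/2*x^2) := le_trans hle1 hle2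
  calc (1-x)^k * f
      ≤ (1/(1 + k*x + k*((k:ℝ)-1)/2*x^2)) * f :=
        mul_le_mul_of_nonneg_right hpow_le hf0
    _ < (1/(1 + k*x + k*((k:ℝ)-1)/2*x^2)) * 1 :=
        mul_lt_mul_of_pos_left hf1 (by positivity)
    _ = 1/(1 + k*x + k*((k:ℝ)-1)/2*x^2) := mul_one _
    _ ≤ 1/2 := one_div_le_one_div_of_le two_pos hB

/-- The ratio estimate `β(ℓ-1)/β(ℓ) < 1/2` from the average-case analysis:
for `n ≥ 16` and `1 ≤ ℓ ≤ log₂ n - 1`,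
`(1 - 1/(2^{ℓ+1} - 1))^{n-ℓ+1} * (1 - 2^{-ℓ}) < 1/2`. -/
theorem beta_ratio_lt_half (n ℓ : ℕ) (hn : 16 ≤ n) (hℓ1 : 1 ≤ ℓ)
    (hℓ2 : (ℓ : ℝ) ≤ Real.logb 2 n - 1) :
    ((1 : ℝ) - 1 / (2 ^ (ℓ + 1) - 1)) ^ (n - ℓ + 1) * (1 - 1 / 2 ^ ℓ)
      < 1 / 2 := by
  have hn0 : (0:ℝ) < n := by exact_mod_cast (by omega : 0 < n)
  -- 2^(ℓ+1) ≤ n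
  have hMn : (2:ℝ)^(ℓ+1) ≤ n := by
    have h1 : (2:ℝ)^((ℓ:ℝ)+1) ≤ (2:ℝ)^(Real.logb 2 n) :=
      Real.rpow_le_rpow_of_exponent_le one_le_two (by linarith)
    rw [Real.rpow_logb two_pos (by norm_num) hn0] at h1
    calc (2:ℝ)^(ℓ+1) = (2:ℝ)^(((ℓ+1:ℕ)):ℝ) := by
          rw [Real.rpow_natCast]
      _ ≤ n := by push_cast; exact h1
  have hMnat : 2^(ℓ+1) ≤ n := by exact_mod_cast hMn
  have hℓn : ℓ ≤ n := le_trans (le_trans (Nat.lt_two_pow_self (n := ℓ)).le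
      (Nat.pow_le_pow_right (by norm_num) (by omega))) hMnat
  have hM4 : (4:ℝ) ≤ (2:ℝ)^(ℓ+1) := by
    have : (2:ℝ)^2 ≤ (2:ℝ)^(ℓ+1) := pow_le_pow_right₀ one_le_two (by omega)
    norm_num at this; linarith
  have hb0 : (0:ℝ) < (2:ℝ)^(ℓ+1) - 1 := by linarith
  have hkcast : ((n - ℓ + 1 : ℕ):ℝ) = (n:ℝ) - ℓ + 1 := by
    push_cast [Nat.cast_sub hℓn]; ring
  have h8 : 8*(ℓ:ℝ) ≤ (2:ℝ)^(ℓ+1) + 8 := by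
    have h' := aux_eight ℓ
    have h'' : ((8*ℓ:ℕ):ℝ) ≤ ((2^(ℓ+1) + 8 : ℕ):ℝ) := by exact_mod_cast h'
    push_cast at h''; linarith
  have hℓr : (1:ℝ) ≤ ℓ := by exact_mod_cast hℓ1
  -- key quadratic inequality, with b = 2^(ℓ+1) - 1, k = n - ℓ + 1
  have hkey : ((2:ℝ)^(ℓ+1) - 1)^2 ≤ ((n - ℓ + 1 : ℕ):ℝ)*((2:ℝ)^(ℓ+1) - 1)
      + ((n - ℓ + 1 : ℕ):ℝ)*(((n - ℓ + 1 : ℕ):ℝ)-1)/2 := by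
    rw [hkcast]
    have h1 : (0:ℝ) ≤ ((n:ℝ) - ℓ + 1) - (((2:ℝ)^(ℓ+1) - 1) - ℓ + 2) := by linarith
    have h2 : (0:ℝ) ≤ ((2:ℝ)^(ℓ+1) - 1) + 9 - 8*ℓ := by linarith
    nlinarith [mul_nonneg h1 h1, mul_nonneg h1 h2, mul_nonneg h2 h2,
      mul_nonneg h1 hb0.le, mul_nonneg h2 hb0.le,
      sq_nonneg (((n:ℝ) - ℓ + 1) - ((2:ℝ)^(ℓ+1) - 1))]
  -- assemble
  have hx0 : (0:ℝ) < 1/((2:ℝ)^(ℓ+1) - 1) := by positivity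
  have hx1 : 1/((2:ℝ)^(ℓ+1) - 1) ≤ 1 := by
    rw [div_le_one hb0]; linarith
  have hB : (2:ℝ) ≤ 1 + ((n - ℓ + 1 : ℕ):ℝ)*(1/((2:ℝ)^(ℓ+1) - 1))
      + ((n - ℓ + 1 : ℕ):ℝ)*(((n - ℓ + 1 : ℕ):ℝ)-1)/2*(1/((2:ℝ)^(ℓ+1) - 1))^2 := by
    have heq : ((n - ℓ + 1 : ℕ):ℝ)*(1/((2:ℝ)^(ℓ+1) - 1))
        + ((n - ℓ + 1 : ℕ):ℝ)*(((n - ℓ + 1 : ℕ):ℝ)-1)/2*(1/((2:ℝ)^(ℓ+1) - 1))^2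
        = (((n - ℓ + 1 : ℕ):ℝ)*((2:ℝ)^(ℓ+1) - 1)
          + ((n - ℓ + 1 : ℕ):ℝ)*(((n - ℓ + 1 : ℕ):ℝ)-1)/2)/((2:ℝ)^(ℓ+1) - 1)^2 := by
      field_simp
    have h1 : (1:ℝ) ≤ ((n - ℓ + 1 : ℕ):ℝ)*(1/((2:ℝ)^(ℓ+1) - 1))
        + ((n - ℓ + 1 : ℕ):ℝ)*(((n - ℓ + 1 : ℕ):ℝ)-1)/2*(1/((2:ℝ)^(ℓ+1) - 1))^2 := by
      rw [heq]; exact (one_le_div (by positivity)).mpr hkey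
    linarith
  have hf0 : (0:ℝ) ≤ 1 - 1/(2:ℝ)^ℓ := by
    have : (1:ℝ)/(2:ℝ)^ℓ ≤ 1 := by
      apply div_le_one_of_le₀ _ (by positivity)
      exact one_le_pow₀ one_le_two
    linarith
  have hf1 : (1:ℝ) - 1/(2:ℝ)^ℓ < 1 := by
    have : (0:ℝ) < 1/(2:ℝ)^ℓ := by positivity
    linarith
  have := aux_main (n - ℓ + 1) (1/((2:ℝ)^(ℓ+1) - 1)) hx0 hx1 hB
    (1 - 1/(2:ℝ)^ℓ) hf0 hf1
  linarith [this]
end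

section
/- Let k ≥ 1 and let X and Y be binary words with |X| ≥ 2k and |Y| ≥ 2k. Suppose X has period p with 1 ≤ p ≤ k, Y has period q with 1 ≤ q ≤ k, and the suffix of X of length 2k equals the prefix of Y of length 2k. Then both X and Y have period gcd(p, q). (This is the claim from the analysis of bad positions: if two periodic strings with blocks of length at most k overlap in at least 2k symbols, they share the same repetition structure.) -/
/-- `HasPeriod w p` : the word `w` has period `p`, i.e. `w[i] = w[i+p]`
whenever both positions are inside `w` (0-based indexing). -/
def HasPeriod (w : List Bool) (p : ℕ) : Prop :=
  ∀ i, i + p < w.length → w.getD i false = w.getD (i + p) false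

lemma getD_drop' (l : List Bool) (n i : ℕ) (h : n + i < l.length) :
    (l.drop n).getD i false = l.getD (n + i) false := by
  rw [List.getD_eq_getElem _ _ (by simp [List.length_drop]; omega),
      List.getD_eq_getElem _ _ h, List.getElem_drop]

lemma getD_take' (l : List Bool) (n i : ℕ) (h : i < n) (h2 : i < l.length) :
    (l.take n).getD i false = l.getD i false := by
  rw [List.getD_eq_getElem _ _ (by simp [List.length_take]; omega),
      List.getD_eq_getElem _ _ h2, List.getElem_take]

lemma hasPeriod_sub (w : List Bool) (p q : ℕ) (hp1 : 1 ≤ p) (hpq : p < q)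
    (hlen : p + q ≤ w.length) (hp : HasPeriod w p) (hq : HasPeriod w q) :
    HasPeriod w (q - p) := by
  intro i hi
  rcases lt_or_ge (i + q) w.length with h | h
  · have h1 := hq i h
    have h2 := hp (i + (q - p)) (by omega)
    rw [h1, h2]
    congr 1
    omega
  · have h1 := hp (i - p) (by omega)
    have h2 := hq (i - p) (by omega)
    have e1 : i - p + p = i := by omega
    have e2 : i - p + q = i + (q - p) := by omega
    rw [e1] at h1
    rw [e2] at h2
    rw [← h1, h2]

lemma fineWilf (w : List Bool) : ∀ n p q, p + q ≤ n → 1 ≤ p → 1 ≤ q →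
    p + q ≤ w.length → HasPeriod w p → HasPeriod w q →
    HasPeriod w (Nat.gcd p q) := by
  intro n
  induction n with
  | zero => intro p q h hp1 hq1; omega
  | succ n ih =>
    intro p q hn hp1 hq1 hlen hp hq
    rcases lt_trichotomy p q with h | h | h
    · have hsub := hasPeriod_sub w p q hp1 h hlen hp hq
      have hg : Nat.gcd p q = Nat.gcd p (q - p) := by
        conv_lhs => rw [show q = (q - p) + p by omega]
        exact Nat.gcd_add_self_right _ _
      rw [hg]
      exact ih p (q - p) (by omega) hp1 (by omega) (by omega) hp hsub
    · subst h
      rw [Nat.gcd_self]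
      exact hp
    · have hsub := hasPeriod_sub w q p hq1 h (by omega) hq hp
      have hg : Nat.gcd p q = Nat.gcd (p - q) q := by
        conv_lhs => rw [show p = (p - q) + q by omega]
        exact Nat.gcd_add_self_left _ _
      rw [hg, Nat.gcd_comm]
      exact ih q (p - q) (by omega) hq1 (by omega) (by omega) hq hsub

/-- Lifting a period `g` from a suffix of length `L` to the whole word,
given the word has period `p` with `p + g ≤ L`. -/
lemma lift_suffix (X : List Bool) (p g L : ℕ) (hg1 : 1 ≤ g) (hp1 : 1 ≤ p)
    (hL : L ≤ X.length) (hpg : p + g ≤ L) (hXp : HasPeriod X p)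
    (hsuf : ∀ i, i + g < L →
      X.getD (X.length - L + i) false = X.getD (X.length - L + i + g) false) :
    HasPeriod X g := by
  set s := X.length - L with hs
  have key : ∀ d i, s - i ≤ d → i + g < X.length →
      X.getD i false = X.getD (i + g) false := by
    intro d
    induction d with
    | zero =>
      intro i hd hi
      have his : s ≤ i := by omega
      have := hsuf (i - s) (by omega)
      have e : s + (i - s) = i := by omega
      rw [e] at this
      exact this
    | succ d ihd =>
      intro i hd hi
      rcases le_or_gt s i with his | his
      · have := hsuf (i - s) (by omega)
        have e : s + (i - s) = i := by omega
        rw [e] at this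
        exact this
      · have h1 := hXp i (by omega)
        have h2 := hXp (i + g) (by omega)
        have h3 := ihd (i + p) (by omega) (by omega)
        rw [h1, h3, h2]
        congr 1
        omega
  intro i hi
  exact key (s - i) i le_rfl hi

/-- Lifting a period `g` from a prefix of length `L` to the whole word,
given the word has period `q` with `q + g ≤ L`. -/
lemma lift_prefix (Y : List Bool) (q g L : ℕ) (hg1 : 1 ≤ g) (hq1 : 1 ≤ q)
    (hL : L ≤ Y.length) (hqg : q + g ≤ L) (hYq : HasPeriod Y q)
    (hpre : ∀ i, i + g < L → Y.getD i false = Y.getD (i + g) false) :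
    HasPeriod Y g := by
  have key : ∀ d i, i ≤ d → i + g < Y.length →
      Y.getD i false = Y.getD (i + g) false := by
    intro d
    induction d with
    | zero =>
      intro i hd hi
      have : i = 0 := by omega
      subst this
      exact hpre 0 (by omega)
    | succ d ihd =>
      intro i hd hi
      rcases lt_or_ge (i + g) L with h | h
      · exact hpre i h
      · have hiq : q ≤ i := by omega
        have h1 := hYq (i - q) (by omega)
        have h2 := hYq (i - q + g) (by omega)
        have h3 := ihd (i - q) (by omega) (by omega)
        have e1 : i - q + q = i := by omega
        have e2 : i - q + g + q = i + g := by omega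
        rw [e1] at h1
        rw [e2] at h2
        rw [← h1, h3, h2]
  intro i hi
  exact key i i le_rfl hi

/-- If two periodic words with periods at most `k` overlap in `2k` symbols
(the suffix of `X` of length `2k` equals the prefix of `Y` of length `2k`),
then both have period `gcd p q`. -/
theorem overlap_same_repetition_structure (k : ℕ) (X Y : List Bool)
    (p q : ℕ) (hk : 1 ≤ k)
    (hX : 2 * k ≤ X.length) (hY : 2 * k ≤ Y.length)
    (hp1 : 1 ≤ p) (hpk : p ≤ k) (hXper : HasPeriod X p)
    (hq1 : 1 ≤ q) (hqk : q ≤ k) (hYper : HasPeriod Y q)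
    (hoverlap : X.drop (X.length - 2 * k) = Y.take (2 * k)) :
    HasPeriod X (Nat.gcd p q) ∧ HasPeriod Y (Nat.gcd p q) := by
  set g := Nat.gcd p q with hg
  have hg1 : 1 ≤ g := Nat.gcd_pos_of_pos_left q hp1
  have hgp : g ≤ p := Nat.le_of_dvd hp1 (Nat.gcd_dvd_left p q)
  have hgq : g ≤ q := Nat.le_of_dvd hq1 (Nat.gcd_dvd_right p q)
  set W := Y.take (2 * k) with hW
  have hWlen : W.length = 2 * k := by
    simp [hW, List.length_take]; omega
  have hslen : X.length - (X.length - 2 * k) = 2 * k := by omega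
  -- W has period q (from Y)
  have hWq : HasPeriod W q := by
    intro i hi
    rw [hWlen] at hi
    rw [getD_take' _ _ _ (by omega) (by omega),
        getD_take' _ _ _ (by omega) (by omega)]
    exact hYper i (by omega)
  -- W has period p (from X via the overlap)
  have hWp : HasPeriod W p := by
    intro i hi
    rw [hWlen] at hi
    rw [← hoverlap]
    rw [getD_drop' _ _ _ (by omega), getD_drop' _ _ _ (by omega)]
    have := hXper (X.length - 2 * k + i) (by omega)
    rw [this]
    congr 1
    omega
  have hWg : HasPeriod W g :=
    fineWilf W (p + q) p q le_rfl hp1 hq1 (by omega) hWp hWq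
  constructor
  · refine lift_suffix X p g (2 * k) hg1 hp1 hX (by omega) hXper ?_
    intro i hi
    have := hWg i (by omega)
    rw [← hoverlap] at this
    rw [getD_drop' _ _ _ (by omega), getD_drop' _ _ _ (by omega)] at this
    rw [this]
    congr 1
    omega
  · refine lift_prefix Y q g (2 * k) hg1 hq1 hY (by omega) hYper ?_
    intro i hi
    have := hWg i (by omega)
    rw [getD_take' _ _ _ (by omega) (by omega),
        getD_take' _ _ _ (by omega) (by omega)] at this
    exact this
end
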